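/- arXiv:2105.11369 — 2 statements merged into one kernel-verified Lean document; each statement's English description precedes it below -/
import Mathlib

section
/- If Λ(x) and Λ(u) are positive definite and ‖g(u) − g(x)‖*_x < 1, then ‖u − x‖_x ≤ ‖g(u) − g(x)‖*_x / (1 − ‖g(u) − g(x)‖*_x). -/
open Matrix

/-- The gradient of the barrier `f(x) = -log det Λ(x)`:
`g(x)_i = -tr(Λ(x)⁻¹ · Λ(e_i))` (with the total matrix inverse, `0` for singular matrices). -/
noncomputable def grad {U L : ℕ} (Lam : (Fin U → ℝ) →ₗ[ℝ] Matrix (Fin L) (Fin L) ℝ)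
    (x : Fin U → ℝ) : Fin U → ℝ :=
  fun i => -((Lam x)⁻¹ * Lam (Pi.single i 1)).trace

/-- The Hessian of the barrier: `H(x)_{ij} = tr(Λ(x)⁻¹ Λ(e_i) Λ(x)⁻¹ Λ(e_j))`. -/
noncomputable def hess {U L : ℕ} (Lam : (Fin U → ℝ) →ₗ[ℝ] Matrix (Fin L) (Fin L) ℝ)
    (x : Fin U → ℝ) : Matrix (Fin U) (Fin U) ℝ :=
  Matrix.of fun i j =>
    ((Lam x)⁻¹ * Lam (Pi.single i 1) * (Lam x)⁻¹ * Lam (Pi.single j 1)).trace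

/-- The local norm `‖v‖_x = (vᵀ H(x) v)^{1/2}`. -/
noncomputable def locNorm {U L : ℕ} (Lam : (Fin U → ℝ) →ₗ[ℝ] Matrix (Fin L) (Fin L) ℝ)
    (x v : Fin U → ℝ) : ℝ :=
  Real.sqrt (v ⬝ᵥ (hess Lam x).mulVec v)

/-- The dual local norm `‖t‖*_x = (tᵀ H(x)⁻¹ t)^{1/2}`. -/
noncomputable def dualNorm {U L : ℕ} (Lam : (Fin U → ℝ) →ₗ[ℝ] Matrix (Fin L) (Fin L) ℝ)
    (x t : Fin U → ℝ) : ℝ :=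
  Real.sqrt (t ⬝ᵥ (hess Lam x)⁻¹.mulVec t)

lemma lam_expand {U L : ℕ} (Lam : (Fin U → ℝ) →ₗ[ℝ] Matrix (Fin L) (Fin L) ℝ) (v : Fin U → ℝ) :
    Lam v = ∑ i, v i • Lam (Pi.single i 1) := by
  conv_lhs => rw [← Finset.univ_sum_single v]
  rw [map_sum]
  refine Finset.sum_congr rfl fun i _ => ?_
  rw [← _root_.map_smul]
  congr 1
  ext j
  by_cases h : j = i <;> simp [Pi.single_apply, h]

lemma hess_apply {U L : ℕ} (Lam : (Fin U → ℝ) →ₗ[ℝ] Matrix (Fin L) (Fin L) ℝ)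
    (x v w : Fin U → ℝ) :
    v ⬝ᵥ (hess Lam x) *ᵥ w = ((Lam x)⁻¹ * Lam v * (Lam x)⁻¹ * Lam w).trace := by
  rw [lam_expand Lam v, lam_expand Lam w]
  simp only [Finset.mul_sum, Finset.sum_mul, Matrix.mul_smul, Matrix.smul_mul, trace_sum,
    trace_smul, smul_eq_mul, dotProduct, mulVec, hess, Matrix.of_apply]
  rw [Finset.sum_comm]
  exact Finset.sum_congr rfl fun i _ => Finset.sum_congr rfl fun j _ => by ring

lemma grad_apply {U L : ℕ} (Lam : (Fin U → ℝ) →ₗ[ℝ] Matrix (Fin L) (Fin L) ℝ)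
    (u x v : Fin U → ℝ) :
    (grad Lam u - grad Lam x) ⬝ᵥ v
      = ((Lam x)⁻¹ * Lam v).trace - ((Lam u)⁻¹ * Lam v).trace := by
  rw [lam_expand Lam v]
  simp only [Finset.mul_sum, Matrix.mul_smul, trace_sum, trace_smul, smul_eq_mul,
    dotProduct, grad, Pi.sub_apply]
  rw [← Finset.sum_sub_distrib]
  exact Finset.sum_congr rfl fun i _ => by ring

lemma trace_transpose_mul_self_pos {n : ℕ} {M : Matrix (Fin n) (Fin n) ℝ} (hM : M ≠ 0) :
    0 < (Mᵀ * M).trace := by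
  have key : (Mᵀ * M).trace = ∑ j, ∑ i, (M i j)^2 := by
    simp [Matrix.trace, Matrix.mul_apply, Matrix.diag, sq]
  rw [key]
  obtain ⟨i, j, hij⟩ : ∃ i j, M i j ≠ 0 := by
    by_contra hc
    push_neg at hc
    exact hM (by ext i j; simpa using hc i j)
  refine Finset.sum_pos' (fun j _ => Finset.sum_nonneg fun i _ => sq_nonneg _)
    ⟨j, Finset.mem_univ _, ?_⟩
  exact Finset.sum_pos' (fun i _ => sq_nonneg _)
    ⟨i, Finset.mem_univ _, by positivity⟩

lemma trace_conj_diag {n : ℕ} {Vm W : Matrix (Fin n) (Fin n) ℝ} (h : W * Vm = 1)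
    (d : Fin n → ℝ) : (Vm * diagonal d * W).trace = ∑ i, d i := by
  rw [trace_mul_cycle, h, Matrix.one_mul, trace_diagonal]

lemma conj_diag_mul {n : ℕ} {Vm W : Matrix (Fin n) (Fin n) ℝ} (h : W * Vm = 1)
    (d e : Fin n → ℝ) :
    (Vm * diagonal d * W) * (Vm * diagonal e * W)
      = Vm * diagonal (fun i => d i * e i) * W := by
  have h1 : W * (Vm * diagonal e * W) = diagonal e * W := by
    rw [← Matrix.mul_assoc, ← Matrix.mul_assoc, h, Matrix.one_mul]
  calc (Vm * diagonal d * W) * (Vm * diagonal e * W)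
      = Vm * diagonal d * (W * (Vm * diagonal e * W)) := by rw [Matrix.mul_assoc]
    _ = Vm * diagonal d * (diagonal e * W) := by rw [h1]
    _ = Vm * (diagonal d * diagonal e) * W := by simp only [Matrix.mul_assoc]
    _ = Vm * diagonal (fun i => d i * e i) * W := by rw [diagonal_mul_diagonal]

lemma spec_key {n : ℕ} {M : Matrix (Fin n) (Fin n) ℝ} (hM : M.IsHermitian)
    (hpd : (1 + M).PosDef) :
    (M * M).trace / (1 + Real.sqrt ((M * M).trace)) ≤ M.trace - ((1 + M)⁻¹ * M).trace := by
  set μ := hM.eigenvalues with hμ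
  set Vm : Matrix (Fin n) (Fin n) ℝ := (hM.eigenvectorUnitary : Matrix (Fin n) (Fin n) ℝ)
    with hVm
  set W : Matrix (Fin n) (Fin n) ℝ := star Vm with hW
  have hVV : W * Vm = 1 := by
    simpa [hW, hVm] using unitary.coe_star_mul_self hM.eigenvectorUnitary
  have hVV' : Vm * W = 1 := by
    simpa [hW, hVm] using unitary.coe_mul_star_self hM.eigenvectorUnitary
  have hspec : M = Vm * diagonal μ * W := by
    simpa using hM.spectral_theorem
  have h1M : 1 + M = Vm * diagonal (fun i => 1 + μ i) * W := by
    have hd : diagonal (fun i => 1 + μ i) = 1 + diagonal μ := by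
      rw [← diagonal_one, ← diagonal_add]
    rw [hd, Matrix.mul_add, Matrix.add_mul, Matrix.mul_one, hVV', ← hspec]
  have hμpos : ∀ i, 0 < 1 + μ i := by
    intro i
    have hw0 : (⇑(hM.eigenvectorBasis i) : Fin n → ℝ) ≠ 0 :=
      by simpa using hM.eigenvectorBasis.orthonormal.ne_zero i
    have h2 := hpd.dotProduct_mulVec_pos hw0
    set w := (⇑(hM.eigenvectorBasis i) : Fin n → ℝ) with hw
    have hMv : M *ᵥ w = μ i • w := hM.mulVec_eigenvectorBasis i
    have hdp : 0 < w ⬝ᵥ w := by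
      have := Matrix.dotProduct_star_self_pos_iff (v := w) |>.2 hw0
      simpa using this
    rw [add_mulVec, one_mulVec, hMv] at h2
    have h3 : (0:ℝ) < w ⬝ᵥ (w + μ i • w) := by simpa using h2
    rw [dotProduct_add, dotProduct_smul, smul_eq_mul] at h3
    nlinarith
  have hne : ∀ i, (1 + μ i) ≠ 0 := fun i => (hμpos i).ne'
  have hinv : (1 + M)⁻¹ = Vm * diagonal (fun i => (1 + μ i)⁻¹) * W := by
    apply inv_eq_right_inv
    rw [h1M, conj_diag_mul hVV]
    have : (fun i => (1 + μ i) * (1 + μ i)⁻¹) = fun _ => (1:ℝ) := by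
      funext i; exact mul_inv_cancel₀ (hne i)
    rw [this, diagonal_one, Matrix.mul_one, hVV']
  have ht1 : M.trace = ∑ i, μ i := by rw [hspec, trace_conj_diag hVV]
  have ht2 : (M * M).trace = ∑ i, μ i * μ i := by
    conv_lhs => rw [hspec]
    rw [conj_diag_mul hVV, trace_conj_diag hVV]
  have ht3 : ((1 + M)⁻¹ * M).trace = ∑ i, (1 + μ i)⁻¹ * μ i := by
    conv_lhs => rw [hinv, hspec]
    rw [conj_diag_mul hVV, trace_conj_diag hVV]
  rw [ht1, ht2, ht3, ← Finset.sum_sub_distrib, Finset.sum_div]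
  have hs0 : 0 ≤ ∑ i, μ i * μ i := Finset.sum_nonneg fun i _ => mul_self_nonneg _
  refine Finset.sum_le_sum fun i _ => ?_
  have hle : μ i ≤ Real.sqrt (∑ j, μ j * μ j) := by
    calc μ i ≤ |μ i| := le_abs_self _
    _ = Real.sqrt (μ i * μ i) := (Real.sqrt_mul_self_eq_abs _).symm
    _ ≤ Real.sqrt (∑ j, μ j * μ j) := Real.sqrt_le_sqrt <|
        Finset.single_le_sum (fun j _ => mul_self_nonneg (μ j)) (Finset.mem_univ i)
  have heq : μ i - (1 + μ i)⁻¹ * μ i = μ i * μ i / (1 + μ i) := by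
    have h := hne i
    field_simp
    ring
  rw [heq]
  gcongr <;> first | exact mul_self_nonneg _ | exact hμpos i | linarith


set_option maxHeartbeats 2000000 in
/-- `‖u − x‖_x ≤ ‖g(u) − g(x)‖*_x / (1 − ‖g(u) − g(x)‖*_x)`. -/
theorem stmt6 {U L : ℕ} (hU : 0 < U) (hL : 0 < L)
    (Lam : (Fin U → ℝ) →ₗ[ℝ] Matrix (Fin L) (Fin L) ℝ)
    (hinj : Function.Injective Lam) (hsym : ∀ v, (Lam v).IsSymm)
    (x u : Fin U → ℝ) (hx : (Lam x).PosDef) (hu : (Lam u).PosDef)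
    (h : dualNorm Lam x (grad Lam u - grad Lam x) < 1) :
    locNorm Lam x (u - x)
      ≤ dualNorm Lam x (grad Lam u - grad Lam x)
        / (1 - dualNorm Lam x (grad Lam u - grad Lam x)) := by
  classical
  -- abbreviations
  set A : Matrix (Fin L) (Fin L) ℝ := Lam x with hAdef
  set B : Matrix (Fin L) (Fin L) ℝ := Lam u with hBdef
  set v : Fin U → ℝ := u - x with hv
  set C : Matrix (Fin L) (Fin L) ℝ := Lam v with hCdef
  set t : Fin U → ℝ := grad Lam u - grad Lam x with htdef
  have hAinv : (A⁻¹).PosDef := hx.inv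
  open MatrixOrder in
  set S : Matrix (Fin L) (Fin L) ℝ := CFC.sqrt A⁻¹ with hSdef
  open MatrixOrder in
  have hSS : S * S = A⁻¹ := CFC.sqrt_mul_sqrt_self _ hAinv.posSemidef.nonneg
  open MatrixOrder in
  have hSsym : Sᵀ = S := by
    have := (CFC.sqrt_nonneg A⁻¹).posSemidef.isHermitian
    rwa [Matrix.IsHermitian, conjTranspose_eq_transpose_of_trivial] at this
  have hdetA : IsUnit A.det := hx.det_pos.ne'.isUnit
  have hAAinv : A * A⁻¹ = 1 := Matrix.mul_nonsing_inv _ hdetA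
  have hAinvA : A⁻¹ * A = 1 := Matrix.nonsing_inv_mul _ hdetA
  have hdetS : IsUnit S.det := by
    rw [isUnit_iff_ne_zero]
    intro h0
    have h1 : S.det * S.det = A⁻¹.det := by rw [← det_mul, hSS]
    have h2 := hAinv.det_pos
    rw [h0] at h1
    nlinarith
  have hSinv : S * S⁻¹ = 1 := Matrix.mul_nonsing_inv _ hdetS
  have hSinv' : S⁻¹ * S = 1 := Matrix.nonsing_inv_mul _ hdetS
  have hcomm : S * A = A * S := by
    have h1 : S * A⁻¹ = A⁻¹ * S := by rw [← hSS, Matrix.mul_assoc]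
    calc S * A = (A * A⁻¹) * S * A := by rw [hAAinv, Matrix.one_mul]
      _ = A * (A⁻¹ * S) * A := by simp only [Matrix.mul_assoc]
      _ = A * (S * A⁻¹) * A := by rw [h1]
      _ = A * S * (A⁻¹ * A) := by simp only [Matrix.mul_assoc]
      _ = A * S := by rw [hAinvA, Matrix.mul_one]
  have hSAS : S * A * S = 1 := by
    calc S * A * S = A * S * S := by rw [hcomm]
      _ = A * A⁻¹ := by rw [Matrix.mul_assoc, hSS]
      _ = 1 := hAAinv
  set Mm : Matrix (Fin L) (Fin L) ℝ := S * C * S with hMm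
  have hCsym : Cᵀ = C := hsym v
  have hMsym : Mm.IsHermitian := by
    rw [Matrix.IsHermitian, conjTranspose_eq_transpose_of_trivial, hMm]
    calc (S * C * S)ᵀ = Sᵀ * (Cᵀ * Sᵀ) := by rw [transpose_mul, transpose_mul]
      _ = S * C * S := by rw [hSsym, hCsym, ← Matrix.mul_assoc]
  have hBAC : B = A + C := by
    rw [hCdef, hv, map_sub]
    abel
  have h1M : 1 + Mm = S * B * S := by
    rw [hBAC, Matrix.mul_add, Matrix.add_mul, hSAS]
  have h1Mpd : (1 + Mm).PosDef := by
    rw [h1M]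
    have hrw : S * B * S = Sᴴ * B * S := by
      rw [conjTranspose_eq_transpose_of_trivial, hSsym]
    refine Matrix.PosDef.of_dotProduct_mulVec_pos ?_ ?_
    · have := isHermitian_conjTranspose_mul_mul S hu.isHermitian
      rwa [conjTranspose_eq_transpose_of_trivial, hSsym] at this
    · intro z hz
      have hz' : S *ᵥ z ≠ 0 := by
        intro h0
        apply hz
        have h2 : S⁻¹ *ᵥ (S *ᵥ z) = S⁻¹ *ᵥ 0 := by rw [h0]
        rwa [mulVec_mulVec, hSinv', one_mulVec, mulVec_zero] at h2
      rw [hrw]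
      simpa only [star_mulVec, Matrix.dotProduct_mulVec, vecMul_vecMul]
        using hu.dotProduct_mulVec_pos hz'
  -- trace identities
  have htr1 : Mm.trace = (A⁻¹ * C).trace := by
    rw [hMm]
    calc (S * C * S).trace = (S * (S * C)).trace := trace_mul_comm _ _
      _ = (A⁻¹ * C).trace := by rw [← Matrix.mul_assoc, hSS]
  have htrX : ∀ D : Matrix (Fin L) (Fin L) ℝ,
      ((S * D * S) * (S * D * S)).trace = (A⁻¹ * D * A⁻¹ * D).trace := by
    intro D
    have e1 : (S * D * S) * (S * D * S) = (S * D * S * S * D) * S := by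
      simp only [Matrix.mul_assoc]
    rw [e1, trace_mul_comm]
    have e2 : S * (S * D * S * S * D) = A⁻¹ * D * A⁻¹ * D := by
      rw [← hSS]; simp only [Matrix.mul_assoc]
    rw [e2]
  have h1Mdet : IsUnit (1 + Mm).det := h1Mpd.det_pos.ne'.isUnit
  have h1Minv : (1 + Mm) * (1 + Mm)⁻¹ = 1 := Matrix.mul_nonsing_inv _ h1Mdet
  have hBinv : B⁻¹ = S * (1 + Mm)⁻¹ * S := by
    have hBeq : B = S⁻¹ * (1 + Mm) * S⁻¹ := by
      rw [h1M]
      calc B = (S⁻¹ * S) * B * (S * S⁻¹) := by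
            rw [hSinv', hSinv, Matrix.one_mul, Matrix.mul_one]
        _ = S⁻¹ * (S * B * S) * S⁻¹ := by simp only [Matrix.mul_assoc]
    rw [hBeq]
    apply inv_eq_right_inv
    calc (S⁻¹ * (1 + Mm) * S⁻¹) * (S * (1 + Mm)⁻¹ * S)
        = S⁻¹ * ((1 + Mm) * ((S⁻¹ * S) * ((1 + Mm)⁻¹ * S))) := by
          simp only [Matrix.mul_assoc]
      _ = S⁻¹ * ((1 + Mm) * ((1 + Mm)⁻¹ * S)) := by rw [hSinv', Matrix.one_mul]
      _ = S⁻¹ * (((1 + Mm) * (1 + Mm)⁻¹) * S) := by simp only [Matrix.mul_assoc]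
      _ = S⁻¹ * S := by rw [h1Minv, Matrix.one_mul]
      _ = 1 := hSinv'
  have htr3 : ((1 + Mm)⁻¹ * Mm).trace = (B⁻¹ * C).trace := by
    rw [hBinv]
    calc ((1 + Mm)⁻¹ * Mm).trace = (((1 + Mm)⁻¹ * (S * C)) * S).trace := by
          rw [hMm]; simp only [Matrix.mul_assoc]
      _ = (S * ((1 + Mm)⁻¹ * (S * C))).trace := trace_mul_comm _ _
      _ = (S * (1 + Mm)⁻¹ * S * C).trace := by simp only [Matrix.mul_assoc]
  -- Hessian is positive definite
  have htrsym : ∀ P Q : Matrix (Fin L) (Fin L) ℝ,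
      (A⁻¹ * P * A⁻¹ * Q).trace = (A⁻¹ * Q * A⁻¹ * P).trace := by
    intro P Q
    calc (A⁻¹ * P * A⁻¹ * Q).trace = ((A⁻¹ * P) * (A⁻¹ * Q)).trace := by
          simp only [Matrix.mul_assoc]
      _ = ((A⁻¹ * Q) * (A⁻¹ * P)).trace := trace_mul_comm _ _
      _ = (A⁻¹ * Q * A⁻¹ * P).trace := by simp only [Matrix.mul_assoc]
  have hHpd : (hess Lam x).PosDef := by
    refine Matrix.PosDef.of_dotProduct_mulVec_pos ?_ ?_
    · rw [Matrix.IsHermitian, conjTranspose_eq_transpose_of_trivial]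
      ext i j
      exact htrsym _ _
    · intro z hz
      have hz2 : z ⬝ᵥ (hess Lam x) *ᵥ z = (A⁻¹ * Lam z * A⁻¹ * Lam z).trace :=
        hess_apply Lam x z z
      have hLz : Lam z ≠ 0 := by
        intro h0
        exact hz (hinj (by rw [h0, map_zero]))
      have hN0 : S * Lam z * S ≠ 0 := by
        intro h0
        apply hLz
        have e : S⁻¹ * (S * Lam z * S) * S⁻¹ = Lam z := by
          calc S⁻¹ * (S * Lam z * S) * S⁻¹
              = (S⁻¹ * S) * Lam z * (S * S⁻¹) := by simp only [Matrix.mul_assoc]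
            _ = Lam z := by rw [hSinv', hSinv, Matrix.one_mul, Matrix.mul_one]
        rw [← e, h0, Matrix.mul_zero, Matrix.zero_mul]
      have hNsym : (S * Lam z * S)ᵀ = S * Lam z * S := by
        calc (S * Lam z * S)ᵀ = Sᵀ * ((Lam z)ᵀ * Sᵀ) := by rw [transpose_mul, transpose_mul]
          _ = S * Lam z * S := by rw [hSsym, hsym z, ← Matrix.mul_assoc]
      have hpos : 0 < ((S * Lam z * S)ᵀ * (S * Lam z * S)).trace :=
        trace_transpose_mul_self_pos hN0
      rw [hNsym, htrX (Lam z)] at hpos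
      have : star z = z := by simp
      rw [this, hz2]
      exact hpos
  -- norms
  set H : Matrix (Fin U) (Fin U) ℝ := hess Lam x with hHdef
  have hHdet : IsUnit H.det := hHpd.det_pos.ne'.isUnit
  have hHH : H * H⁻¹ = 1 := Matrix.mul_nonsing_inv _ hHdet
  have hHinvpd : (H⁻¹).PosDef := hHpd.inv
  have hHsymm : Hᵀ = H := by
    have := hHpd.isHermitian
    rwa [Matrix.IsHermitian, conjTranspose_eq_transpose_of_trivial] at this
  set dl : ℝ := dualNorm Lam x t with hdl
  set lam : ℝ := locNorm Lam x v with hlamdef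
  have hdl0 : 0 ≤ dl := Real.sqrt_nonneg _
  have hlam0 : 0 ≤ lam := Real.sqrt_nonneg _
  have hdlsq : dl ^ 2 = t ⬝ᵥ H⁻¹ *ᵥ t := by
    rw [hdl, dualNorm, Real.sq_sqrt]
    have := hHinvpd.posSemidef.dotProduct_mulVec_nonneg t
    simpa using this
  have hlamsq : lam ^ 2 = v ⬝ᵥ H *ᵥ v := by
    rw [hlamdef, locNorm, Real.sq_sqrt]
    have := hHpd.posSemidef.dotProduct_mulVec_nonneg v
    simpa using this
  -- key inequality from spectral lemma
  have hkey := spec_key hMsym h1Mpd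
  have e1 : (Mm * Mm).trace = lam ^ 2 := by
    rw [hMm, htrX C, hlamsq, hess_apply]
  have e2 : Mm.trace - ((1 + Mm)⁻¹ * Mm).trace = t ⬝ᵥ v := by
    rw [htr1, htr3, htdef, grad_apply]
  rw [e1, e2] at hkey
  have hsqlam : Real.sqrt (lam ^ 2) = lam := Real.sqrt_sq hlam0
  rw [hsqlam] at hkey
  -- handle lam = 0 case
  rcases eq_or_lt_of_le hlam0 with h0 | hpos
  · rw [← h0]
    exact div_nonneg hdl0 (by linarith)
  -- Cauchy–Schwarz : t ⬝ᵥ v ≤ dl * lam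
  have hCS : t ⬝ᵥ v ≤ dl * lam := by
    set a : Fin U → ℝ := H⁻¹ *ᵥ t with ha
    have hta : H *ᵥ a = t := by
      rw [ha, mulVec_mulVec, hHH, one_mulVec]
    have hsymHvec : ∀ y z : Fin U → ℝ, y ⬝ᵥ H *ᵥ z = z ⬝ᵥ H *ᵥ y := by
      intro y z
      rw [Matrix.dotProduct_mulVec, ← Matrix.mulVec_transpose, hHsymm, dotProduct_comm]
    have hq : t ⬝ᵥ v = a ⬝ᵥ H *ᵥ v := by
      rw [← hta, dotProduct_comm, hsymHvec]
    have hp : a ⬝ᵥ H *ᵥ a = dl ^ 2 := by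
      rw [hta, dotProduct_comm, hdlsq, ha]
    set q : ℝ := a ⬝ᵥ H *ᵥ v with hqdef
    have hr : 0 < lam ^ 2 := by positivity
    have hquad : 0 ≤ (a - (q / lam ^ 2) • v) ⬝ᵥ H *ᵥ (a - (q / lam ^ 2) • v) := by
      have := hHpd.posSemidef.dotProduct_mulVec_nonneg (a - (q / lam ^ 2) • v)
      simpa using this
    have hexp : (a - (q / lam ^ 2) • v) ⬝ᵥ H *ᵥ (a - (q / lam ^ 2) • v)
        = dl ^ 2 - 2 * (q / lam ^ 2) * q + (q / lam ^ 2) ^ 2 * lam ^ 2 := by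
      have hav : v ⬝ᵥ H *ᵥ a = q := by rw [hsymHvec]
      rw [sub_dotProduct, mulVec_sub, dotProduct_sub, dotProduct_sub, mulVec_smul,
        smul_dotProduct, dotProduct_smul, smul_dotProduct, dotProduct_smul]
      rw [hp, hav, ← hqdef, ← hlamsq]
      simp only [smul_eq_mul]
      ring
    rw [hexp] at hquad
    have hq2 : q ^ 2 ≤ dl ^ 2 * lam ^ 2 := by
      have heq2 : (q / lam ^ 2) ^ 2 * lam ^ 2 = q ^ 2 / lam ^ 2 := by
        field_simp
      rw [heq2] at hquad
      have h2 : 0 ≤ dl ^ 2 - q ^ 2 / lam ^ 2 := by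
        have : 2 * (q / lam ^ 2) * q = 2 * (q ^ 2 / lam ^ 2) := by
          field_simp
        rw [this] at hquad
        linarith
      have h3 : q ^ 2 / lam ^ 2 ≤ dl ^ 2 := by linarith
      have h4 : q ^ 2 = q ^ 2 / lam ^ 2 * lam ^ 2 := by
        field_simp
      rw [h4]
      exact mul_le_mul_of_nonneg_right h3 (le_of_lt hr)
    have hdlam : 0 ≤ dl * lam := mul_nonneg hdl0 hlam0
    rw [hq]
    nlinarith [hq2, hdlam, sq_nonneg (q - dl * lam), sq_nonneg (q + dl * lam)]
  -- conclude
  have hchain : lam ^ 2 / (1 + lam) ≤ dl * lam := le_trans hkey hCS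
  have h1lam : 0 < 1 + lam := by linarith
  rw [div_le_iff₀ h1lam] at hchain
  have h1dl : 0 < 1 - dl := by linarith [h]
  rw [le_div_iff₀ h1dl]
  nlinarith [hchain, hpos]
end

section
/- Suppose Λ(x) and Λ(y) are positive definite, set s := −g(y), and suppose ‖x − y‖_x ≤ r for some real r with 0 ≤ r < 1/3. Define the Newton iterate x₊ := 2x − H(x)⁻¹·s. Then Λ(x₊) is positive definite and ‖x₊ − y‖_{x₊} ≤ r²/(1 − 2r). -/
open Matrix
set_option linter.unusedSectionVars false
set_option maxHeartbeats 1000000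
section helpers
variable {n : Type*} [Fintype n] [DecidableEq n]
set_option linter.unusedSectionVars false
variable {n : Type*} [Fintype n] [DecidableEq n]

lemma trace_mul_eq_sum (P Q : Matrix n n ℝ) :
    (P * Q).trace = ∑ p : n × n, P p.1 p.2 * Q p.2 p.1 := by
  simp [Matrix.trace, Matrix.diag, Matrix.mul_apply, Fintype.sum_prod_type]

lemma isSymm_apply {P : Matrix n n ℝ} (hP : P.IsSymm) (i j : n) : P j i = P i j := by
  conv_lhs => rw [← hP]
  rfl

lemma trace_sq_nonneg {P : Matrix n n ℝ} (hP : P.IsSymm) : 0 ≤ (P * P).trace := by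
  rw [trace_mul_eq_sum]
  exact Finset.sum_nonneg fun p _ => by
    rw [isSymm_apply hP p.1 p.2]; exact mul_self_nonneg _

lemma trace_mul_self_eq_zero {P : Matrix n n ℝ} (hP : P.IsSymm) (h : (P * P).trace = 0) :
    P = 0 := by
  rw [trace_mul_eq_sum] at h
  ext i j
  have := (Finset.sum_eq_zero_iff_of_nonneg (fun p _ => by
    rw [isSymm_apply hP p.1 p.2]; exact mul_self_nonneg _)).mp h (i, j) (Finset.mem_univ _)
  rw [isSymm_apply hP i j] at this
  simpa using (mul_self_eq_zero).mp this

/-- Cauchy–Schwarz for traces of symmetric matrices. -/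
lemma trace_CS {P Q : Matrix n n ℝ} (hP : P.IsSymm) (hQ : Q.IsSymm) :
    ((P * Q).trace) ^ 2 ≤ (P * P).trace * (Q * Q).trace := by
  rw [trace_mul_eq_sum, trace_mul_eq_sum, trace_mul_eq_sum]
  have h := Finset.sum_mul_sq_le_sq_mul_sq Finset.univ
    (fun p : n × n => P p.1 p.2) (fun p : n × n => Q p.1 p.2)
  calc (∑ p : n × n, P p.1 p.2 * Q p.2 p.1) ^ 2
      = (∑ p : n × n, P p.1 p.2 * Q p.1 p.2) ^ 2 := by
        congr 1; exact Finset.sum_congr rfl fun p _ => by rw [isSymm_apply hQ p.1 p.2]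
    _ ≤ (∑ p : n × n, P p.1 p.2 ^ 2) * (∑ p : n × n, Q p.1 p.2 ^ 2) := h
    _ = (∑ p : n × n, P p.1 p.2 * P p.2 p.1) * (∑ p : n × n, Q p.1 p.2 * Q p.2 p.1) := by
        congr 1
        · exact Finset.sum_congr rfl fun p _ => by rw [isSymm_apply hP p.1 p.2, sq]
        · exact Finset.sum_congr rfl fun p _ => by rw [isSymm_apply hQ p.1 p.2, sq]

lemma dp_self_nonneg (u : n → ℝ) : 0 ≤ u ⬝ᵥ u :=
  Finset.sum_nonneg fun i _ => mul_self_nonneg _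

lemma dp_self_pos {u : n → ℝ} (hu : u ≠ 0) : 0 < u ⬝ᵥ u :=
  lt_of_le_of_ne (dp_self_nonneg u) fun h => hu (dotProduct_self_eq_zero.mp h.symm)

/-- quadratic form bound via Frobenius norm: |uᵀEu| ≤ √tr(E²)·(u⬝u). -/
lemma quad_abs_le {E : Matrix n n ℝ} (hE : E.IsSymm) (u : n → ℝ) :
    |u ⬝ᵥ E.mulVec u| ≤ Real.sqrt ((E * E).trace) * (u ⬝ᵥ u) := by
  have hexp : u ⬝ᵥ E.mulVec u = ∑ p : n × n, E p.1 p.2 * (u p.1 * u p.2) := by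
    simp only [dotProduct, Matrix.mulVec, Fintype.sum_prod_type, Finset.mul_sum]
    exact Finset.sum_congr rfl fun i _ => Finset.sum_congr rfl fun j _ => by ring
  have h := Finset.sum_mul_sq_le_sq_mul_sq Finset.univ
    (fun p : n × n => E p.1 p.2) (fun p : n × n => u p.1 * u p.2)
  have h1 : (∑ p : n × n, E p.1 p.2 ^ 2) = (E * E).trace := by
    rw [trace_mul_eq_sum]
    exact Finset.sum_congr rfl fun p _ => by rw [isSymm_apply hE p.1 p.2, sq]
  have h2 : (∑ p : n × n, (u p.1 * u p.2) ^ 2) = (u ⬝ᵥ u) ^ 2 := by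
    simp only [dotProduct, Fintype.sum_prod_type, sq, Finset.sum_mul, Finset.mul_sum]
    exact Finset.sum_congr rfl fun i _ => Finset.sum_congr rfl fun j _ => by ring
  rw [h1, h2, ← hexp] at h
  have habs : |u ⬝ᵥ E.mulVec u| = Real.sqrt ((u ⬝ᵥ E.mulVec u) ^ 2) :=
    (Real.sqrt_sq_eq_abs _).symm
  rw [habs]
  calc Real.sqrt ((u ⬝ᵥ E.mulVec u) ^ 2) ≤ Real.sqrt ((E * E).trace * (u ⬝ᵥ u) ^ 2) :=
        Real.sqrt_le_sqrt h
    _ = Real.sqrt ((E * E).trace) * (u ⬝ᵥ u) := by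
        rw [Real.sqrt_mul (trace_sq_nonneg hE), Real.sqrt_sq (dp_self_nonneg u)]

open scoped MatrixOrder in
noncomputable def Matrix.PosSemidef.sqrt {T : Matrix n n ℝ} (_hT : T.PosSemidef) : Matrix n n ℝ :=
  CFC.sqrt T

open scoped MatrixOrder in
lemma Matrix.PosSemidef.posSemidef_sqrt {T : Matrix n n ℝ} (hT : T.PosSemidef) :
    hT.sqrt.PosSemidef :=
  (CFC.sqrt_nonneg T).posSemidef

open scoped MatrixOrder in
lemma Matrix.PosSemidef.sqrt_mul_self {T : Matrix n n ℝ} (hT : T.PosSemidef) :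
    hT.sqrt * hT.sqrt = T :=
  CFC.sqrt_mul_sqrt_self T hT.nonneg

lemma psd_trace_nonneg {S : Matrix n n ℝ} (hS : S.PosSemidef) : 0 ≤ S.trace := by
  have : ∀ i, 0 ≤ S i i := fun i => by
    have := hS.dotProduct_mulVec_nonneg (Pi.single i 1)
    simpa [dotProduct, Matrix.mulVec, Pi.single_apply] using this
  exact Finset.sum_nonneg fun i _ => this i

lemma psd_trace_mul_nonneg {S T : Matrix n n ℝ} (hS : S.PosSemidef) (hT : T.PosSemidef) :
    0 ≤ (S * T).trace := by
  have hQ := hT.posSemidef_sqrt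
  have hQQ : hT.sqrt * hT.sqrt = T := hT.sqrt_mul_self
  have : (S * T).trace = (hT.sqrt * S * hT.sqrt).trace := by
    conv_lhs => rw [← hQQ]
    rw [← Matrix.mul_assoc, trace_mul_comm, ← Matrix.mul_assoc]
  rw [this]
  have : (hT.sqrt)ᴴ * S * hT.sqrt = hT.sqrt * S * hT.sqrt := by
    rw [hQ.isHermitian]
  exact psd_trace_nonneg (this ▸ hS.conjTranspose_mul_mul_same hT.sqrt)

/-- tr(S·T) ≤ c tr(S) if S ⪰ 0, T symmetric with c•1 − T ⪰ 0. -/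
lemma trace_mul_le_of_le {S T : Matrix n n ℝ} (c : ℝ) (hS : S.PosSemidef)
    (hT : (c • (1 : Matrix n n ℝ) - T).PosSemidef) :
    (S * T).trace ≤ c * S.trace := by
  have h := psd_trace_mul_nonneg hS hT
  rw [Matrix.mul_sub, Matrix.trace_sub, Matrix.mul_smul, Matrix.trace_smul, Matrix.mul_one,
    smul_eq_mul, sub_nonneg] at h
  exact h

lemma isHermitian_of_isSymm {M : Matrix n n ℝ} (h : M.IsSymm) : M.IsHermitian := by
  rwa [Matrix.IsHermitian, conjTranspose_eq_transpose_of_trivial]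

lemma isSymm_of_isHermitian {M : Matrix n n ℝ} (h : M.IsHermitian) : M.IsSymm := by
  rwa [Matrix.IsHermitian, conjTranspose_eq_transpose_of_trivial] at h

/-- Positive definiteness from a quadratic lower bound. -/
lemma pd_of_quad {M : Matrix n n ℝ} (hM : M.IsSymm) {α : ℝ} (hα : 0 < α)
    (h : ∀ u, α * (u ⬝ᵥ u) ≤ u ⬝ᵥ M.mulVec u) : M.PosDef := by
  refine Matrix.PosDef.of_dotProduct_mulVec_pos (isHermitian_of_isSymm hM) fun u hu => ?_
  have := h u
  have hpos := dp_self_pos hu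
  simp only [star_trivial]
  nlinarith

lemma psd_of_quad {M : Matrix n n ℝ} (hM : M.IsSymm)
    (h : ∀ u, 0 ≤ u ⬝ᵥ M.mulVec u) : M.PosSemidef :=
  Matrix.PosSemidef.of_dotProduct_mulVec_nonneg (isHermitian_of_isSymm hM)
    fun u => by simpa [star_trivial] using h u

lemma dp_symm_mulVec {S : Matrix n n ℝ} (hS : S.IsSymm) (v w : n → ℝ) :
    v ⬝ᵥ S.mulVec w = S.mulVec v ⬝ᵥ w := by
  rw [Matrix.dotProduct_mulVec, ← Matrix.mulVec_transpose, hS.eq]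

/-- Loewner bound on the inverse: if `M ⪰ α·1 ≻ 0` then `uᵀM⁻¹u ≤ α⁻¹ (u⬝u)`. -/
lemma loewner_inv {M : Matrix n n ℝ} (hM : M.PosDef) {α : ℝ} (hα : 0 < α)
    (h : ∀ u, α * (u ⬝ᵥ u) ≤ u ⬝ᵥ M.mulVec u) (u : n → ℝ) :
    u ⬝ᵥ M⁻¹.mulVec u ≤ α⁻¹ * (u ⬝ᵥ u) := by
  have hMdet : IsUnit M.det := isUnit_iff_ne_zero.mpr hM.det_pos.ne'
  have hMinv : M⁻¹.PosSemidef := hM.inv.posSemidef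
  set S := hMinv.sqrt with hSdef
  have hSS : S * S = M⁻¹ := hMinv.sqrt_mul_self
  have hSsym : S.IsSymm := isSymm_of_isHermitian hMinv.posSemidef_sqrt.isHermitian
  have hMsym : M.IsSymm := isSymm_of_isHermitian hM.isHermitian
  have hc1 : S * M⁻¹ = M⁻¹ * S := by rw [← hSS, Matrix.mul_assoc]
  have hcomm : S * M = M * S := by
    calc S * M = (M * M⁻¹) * S * M := by rw [Matrix.mul_nonsing_inv _ hMdet, Matrix.one_mul]
      _ = M * (M⁻¹ * S) * M := by rw [Matrix.mul_assoc M M⁻¹ S]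
      _ = M * (S * M⁻¹) * M := by rw [hc1]
      _ = M * S * (M⁻¹ * M) := by
          rw [← Matrix.mul_assoc M S M⁻¹, Matrix.mul_assoc (M * S) M⁻¹ M]
      _ = M * S := by rw [Matrix.nonsing_inv_mul _ hMdet, Matrix.mul_one]
  have key : S * M * S = 1 := by
    rw [hcomm, Matrix.mul_assoc, hSS, Matrix.mul_nonsing_inv _ hMdet]
  have hw := h (S.mulVec u)
  have e1 : S.mulVec u ⬝ᵥ S.mulVec u = u ⬝ᵥ M⁻¹.mulVec u := by
    rw [← dp_symm_mulVec hSsym, Matrix.mulVec_mulVec, hSS]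
  have e2 : S.mulVec u ⬝ᵥ M.mulVec (S.mulVec u) = u ⬝ᵥ u := by
    rw [← dp_symm_mulVec hSsym, Matrix.mulVec_mulVec, Matrix.mulVec_mulVec, key]
    simp
  rw [e1, e2] at hw
  have h2 := mul_le_mul_of_nonneg_left hw (inv_nonneg.mpr hα.le)
  rwa [inv_mul_cancel_left₀ hα.ne'] at h2

/-- congruence preserves positive definiteness. -/
lemma pd_congr {T s : Matrix n n ℝ} (hT : T.PosDef) (hssym : s.IsSymm)
    (hs : IsUnit s.det) : (s * T * s).PosDef := by
  have hTsym : T.IsSymm := isSymm_of_isHermitian hT.isHermitian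
  refine Matrix.PosDef.of_dotProduct_mulVec_pos (isHermitian_of_isSymm ?_) fun u hu => ?_
  · rw [Matrix.IsSymm, Matrix.transpose_mul, Matrix.transpose_mul, hssym.eq, hTsym.eq,
      Matrix.mul_assoc]
  · simp only [star_trivial]
    have hsu : s.mulVec u ≠ 0 := by
      intro h0
      have hinj : Function.Injective s.mulVec :=
        Matrix.mulVec_injective_iff_isUnit.mpr ((Matrix.isUnit_iff_isUnit_det s).mpr hs)
      exact hu (hinj (by simpa using h0))
    have hpos := hT.dotProduct_mulVec_pos hsu
    simp only [star_trivial] at hpos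
    calc (0 : ℝ) < s.mulVec u ⬝ᵥ T.mulVec (s.mulVec u) := hpos
      _ = u ⬝ᵥ (s * T * s).mulVec u := by
          rw [← dp_symm_mulVec hssym, Matrix.mulVec_mulVec, Matrix.mulVec_mulVec]

lemma trace_pow4_le {E : Matrix n n ℝ} (hE : E.IsSymm) :
    ((E * E) * (E * E)).trace ≤ ((E * E).trace) ^ 2 := by
  rw [trace_mul_eq_sum]
  have hentry : ∀ p : n × n, (E * E) p.1 p.2 * (E * E) p.2 p.1 ≤
      (∑ k, E p.1 k ^ 2) * (∑ k, E p.2 k ^ 2) := by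
    intro p
    have h1 : (E * E) p.1 p.2 = ∑ k, E p.1 k * E p.2 k := by
      rw [Matrix.mul_apply]
      exact Finset.sum_congr rfl fun k _ => by rw [isSymm_apply hE p.2 k]
    have h2 : (E * E) p.2 p.1 = ∑ k, E p.1 k * E p.2 k := by
      rw [Matrix.mul_apply]
      exact Finset.sum_congr rfl fun k _ => by
        rw [isSymm_apply hE p.1 k, mul_comm]
    rw [h1, h2, ← sq]
    exact Finset.sum_mul_sq_le_sq_mul_sq Finset.univ _ _
  calc (∑ p : n × n, (E * E) p.1 p.2 * (E * E) p.2 p.1)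
      ≤ ∑ p : n × n, (∑ k, E p.1 k ^ 2) * (∑ k, E p.2 k ^ 2) :=
        Finset.sum_le_sum fun p _ => hentry p
    _ = (∑ i, ∑ k, E i k ^ 2) * (∑ j, ∑ k, E j k ^ 2) := by
        rw [Finset.sum_mul_sum, Fintype.sum_prod_type]
    _ = ((E * E).trace) ^ 2 := by
        rw [trace_mul_eq_sum, Fintype.sum_prod_type, sq]
        congr 1 <;> exact Finset.sum_congr rfl fun i _ => Finset.sum_congr rfl fun k _ => by
          rw [isSymm_apply hE i k, sq]


lemma psd_mul_self {F : Matrix n n ℝ} (hF : F.IsSymm) : (F * F).PosSemidef := by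
  refine psd_of_quad ?_ fun u => ?_
  · rw [Matrix.IsSymm, Matrix.transpose_mul, hF.eq]
  · rw [← Matrix.mulVec_mulVec, dp_symm_mulVec hF]
    exact dp_self_nonneg _

end helpers

open Matrix

section expand
variable {U L : ℕ}

lemma single_expand (z : Fin U → ℝ) : z = ∑ i, z i • (Pi.single i 1 : Fin U → ℝ) := by
  ext j
  simp [Pi.single_apply]

lemma Lam_expand (Lam : (Fin U → ℝ) →ₗ[ℝ] Matrix (Fin L) (Fin L) ℝ) (z : Fin U → ℝ) :
    Lam z = ∑ i, z i • Lam (Pi.single i 1) := by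
  conv_lhs => rw [single_expand z]
  rw [map_sum]
  exact Finset.sum_congr rfl fun i _ => by rw [_root_.map_smul]

lemma hess_bilin (Lam : (Fin U → ℝ) →ₗ[ℝ] Matrix (Fin L) (Fin L) ℝ) (p z w : Fin U → ℝ) :
    z ⬝ᵥ (hess Lam p).mulVec w = ((Lam p)⁻¹ * Lam z * (Lam p)⁻¹ * Lam w).trace := by
  conv_rhs => rw [Lam_expand Lam z, Lam_expand Lam w]
  simp only [Matrix.mul_sum, Matrix.sum_mul, Matrix.mul_smul, Matrix.smul_mul,
    Matrix.trace_sum, Matrix.trace_smul, smul_eq_mul, Finset.mul_sum, Finset.sum_mul]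
  simp only [dotProduct, Matrix.mulVec, hess, Matrix.of_apply, Finset.mul_sum]
  rw [Finset.sum_comm]
  exact Finset.sum_congr rfl fun i _ => Finset.sum_congr rfl fun j _ => by ring

lemma dot_grad (Lam : (Fin U → ℝ) →ₗ[ℝ] Matrix (Fin L) (Fin L) ℝ) (y z : Fin U → ℝ) :
    z ⬝ᵥ (-grad Lam y) = ((Lam y)⁻¹ * Lam z).trace := by
  conv_rhs => rw [Lam_expand Lam z]
  simp only [Matrix.mul_sum, Matrix.mul_smul, Matrix.trace_sum, Matrix.trace_smul,
    smul_eq_mul]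
  simp only [dotProduct, grad, Pi.neg_apply, neg_neg]

end expand

/-- the Newton iterate `x₊ = 2x − H(x)⁻¹s` (with `s = -g(y)`)
satisfies `Λ(x₊) ≻ 0` and `‖x₊ − y‖_{x₊} ≤ r²/(1 − 2r)` if `‖x − y‖_x ≤ r < 1/3`. -/
theorem stmt12 {U L : ℕ} (hU : 0 < U) (hL : 0 < L)
    (Lam : (Fin U → ℝ) →ₗ[ℝ] Matrix (Fin L) (Fin L) ℝ)
    (hinj : Function.Injective Lam) (hsym : ∀ v, (Lam v).IsSymm)
    (x y : Fin U → ℝ) (hx : (Lam x).PosDef) (hy : (Lam y).PosDef)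
    (s : Fin U → ℝ) (hs : s = -grad Lam y)
    (r : ℝ) (hr0 : 0 ≤ r) (hr : r < 1 / 3)
    (hxy : locNorm Lam x (x - y) ≤ r)
    (xp : Fin U → ℝ) (hxp : xp = (2 : ℝ) • x - (hess Lam x)⁻¹.mulVec s) :
    (Lam xp).PosDef ∧ locNorm Lam xp (xp - y) ≤ r ^ 2 / (1 - 2 * r) := by
  subst hs
  have hr1 : (0:ℝ) < 1 - r := by linarith
  have hr2 : (0:ℝ) < 1 - 2 * r := by linarith
  -- square root of Λ(x)
  have hApsd := hx.posSemidef
  set sA := hApsd.sqrt with hsAdef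
  have hsq : sA * sA = Lam x := hApsd.sqrt_mul_self
  have hsAsym : sA.IsSymm := isSymm_of_isHermitian hApsd.posSemidef_sqrt.isHermitian
  have hsAdet : IsUnit sA.det := by
    apply isUnit_iff_ne_zero.mpr
    intro h0
    have : (Lam x).det = 0 := by rw [← hsq, Matrix.det_mul, h0, mul_zero]
    exact hx.det_pos.ne' this
  set sh := sA⁻¹ with hshdef
  have hshsA : sh * sA = 1 := Matrix.nonsing_inv_mul _ hsAdet
  have hsAsh : sA * sh = 1 := Matrix.mul_nonsing_inv _ hsAdet
  have hshsym : sh.IsSymm := by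
    rw [hshdef, Matrix.IsSymm, Matrix.transpose_nonsing_inv, hsAsym.eq]
  have hshdet : IsUnit sh.det := by
    apply isUnit_iff_ne_zero.mpr
    intro h0
    have h1 := congrArg Matrix.det hshsA
    rw [Matrix.det_mul, h0, zero_mul, Matrix.det_one] at h1
    exact zero_ne_one h1
  have hAinv : (Lam x)⁻¹ = sh * sh := by rw [← hsq, Matrix.mul_inv_rev, ← hshdef]
  set phi : (Fin U → ℝ) → Matrix (Fin L) (Fin L) ℝ := fun v => sh * Lam v * sh with hphidef
  have hphisym : ∀ v, (phi v).IsSymm := by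
    intro v
    show ((sh * Lam v * sh)ᵀ = sh * Lam v * sh)
    rw [Matrix.transpose_mul, Matrix.transpose_mul, hshsym.eq, (hsym v).eq,
      ← Matrix.mul_assoc]
  have hphi_recover : ∀ v, sA * phi v * sA = Lam v := by
    intro v
    show sA * (sh * Lam v * sh) * sA = Lam v
    rw [← Matrix.mul_assoc, ← Matrix.mul_assoc, hsAsh, Matrix.one_mul,
      Matrix.mul_assoc, hshsA, Matrix.mul_one]
  -- bilinear form of the Hessian at x
  have hbil : ∀ z w, z ⬝ᵥ (hess Lam x).mulVec w = (phi z * phi w).trace := by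
    intro z w
    rw [hess_bilin, hAinv]
    show _ = ((sh * Lam z * sh) * (sh * Lam w * sh)).trace
    simp only [Matrix.mul_assoc]
    rw [Matrix.trace_mul_comm]
    simp only [Matrix.mul_assoc]
  have hphix : phi x = 1 := by
    show sh * Lam x * sh = 1
    rw [← hsq, ← Matrix.mul_assoc, hshsA, Matrix.one_mul, hsAsh]
  -- G = φ(y), E = 1 - G
  set G := phi y with hGdefn
  have hGpd : G.PosDef := pd_congr hy hshsym hshdet
  have hGsym : G.IsSymm := hphisym y
  have hGdet : IsUnit G.det := isUnit_iff_ne_zero.mpr hGpd.det_pos.ne'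
  set E := (1 : Matrix (Fin L) (Fin L) ℝ) - G with hEdefn
  have hEsym : E.IsSymm := by
    rw [hEdefn, Matrix.IsSymm, Matrix.transpose_sub, Matrix.transpose_one, hGsym.eq]
  have hphi_sub : ∀ a b, phi (a - b) = phi a - phi b := by
    intro a b
    show sh * Lam (a - b) * sh = sh * Lam a * sh - sh * Lam b * sh
    rw [map_sub, Matrix.mul_sub, Matrix.sub_mul]
  have hphixy : phi (x - y) = E := by rw [hphi_sub, hphix]
  have hE2 : (E * E).trace ≤ r ^ 2 := by
    have h1 : locNorm Lam x (x - y) = Real.sqrt ((E * E).trace) := by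
      rw [locNorm, hbil, hphixy]
    rw [h1] at hxy
    nlinarith [Real.sq_sqrt (trace_sq_nonneg hEsym), Real.sqrt_nonneg ((E * E).trace)]
  have hEq : ∀ u, |u ⬝ᵥ E.mulVec u| ≤ r * (u ⬝ᵥ u) := by
    intro u
    refine (quad_abs_le hEsym u).trans ?_
    refine mul_le_mul_of_nonneg_right ?_ (dp_self_nonneg u)
    have h2 : Real.sqrt ((E * E).trace) ≤ Real.sqrt (r ^ 2) := Real.sqrt_le_sqrt hE2
    rwa [Real.sqrt_sq hr0] at h2
  have hG1E : G = 1 - E := by rw [hEdefn]; abel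
  have hGlow : ∀ u, (1 - r) * (u ⬝ᵥ u) ≤ u ⬝ᵥ G.mulVec u := by
    intro u
    have e : u ⬝ᵥ G.mulVec u = u ⬝ᵥ u - u ⬝ᵥ E.mulVec u := by
      rw [hG1E, Matrix.sub_mulVec, Matrix.one_mulVec, dotProduct_sub]
    have h1 := (abs_le.mp (hEq u)).2
    rw [e]; nlinarith [dp_self_nonneg u]
  -- Hessian at x is positive definite
  have hsingle : ∀ i j, (hess Lam x) i j = (phi (Pi.single i 1) * phi (Pi.single j 1)).trace := by
    intro i j
    have h1 := hbil (Pi.single i 1) (Pi.single j 1)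
    rw [← h1]
    simp [dotProduct, Matrix.mulVec, Pi.single_apply, Finset.sum_ite_eq]
  have hHherm : (hess Lam x).IsHermitian := by
    apply isHermitian_of_isSymm
    rw [Matrix.IsSymm]
    ext i j
    rw [Matrix.transpose_apply, hsingle i j, hsingle j i, Matrix.trace_mul_comm]
  have hHpd : (hess Lam x).PosDef := by
    refine Matrix.PosDef.of_dotProduct_mulVec_pos hHherm fun z hz => ?_
    simp only [star_trivial]
    have hnn : 0 ≤ z ⬝ᵥ (hess Lam x).mulVec z := by
      rw [hbil]; exact trace_sq_nonneg (hphisym z)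
    rcases eq_or_lt_of_le hnn with heq | h
    · exfalso
      have hphiz : phi z = 0 := by
        apply trace_mul_self_eq_zero (hphisym z)
        rw [← hbil]; exact heq.symm
      have hLz : Lam z = 0 := by
        rw [← hphi_recover z, hphiz, Matrix.mul_zero, Matrix.zero_mul]
      exact hz (hinj (by rw [hLz, map_zero]))
    · exact h
  have hHdet : IsUnit (hess Lam x).det := isUnit_iff_ne_zero.mpr hHpd.det_pos.ne'
  set v := (hess Lam x)⁻¹.mulVec (-grad Lam y) with hvdef
  have hHv : (hess Lam x).mulVec v = -grad Lam y := by
    rw [hvdef, Matrix.mulVec_mulVec, Matrix.mul_nonsing_inv _ hHdet, Matrix.one_mulVec]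
  have hGinv : G⁻¹ = sA * (Lam y)⁻¹ * sA := by
    show (sh * Lam y * sh)⁻¹ = sA * (Lam y)⁻¹ * sA
    rw [Matrix.mul_inv_rev, Matrix.mul_inv_rev, hshdef,
      Matrix.nonsing_inv_nonsing_inv _ hsAdet, ← Matrix.mul_assoc]
  have hGinvsym : G⁻¹.IsSymm := by
    rw [Matrix.IsSymm, Matrix.transpose_nonsing_inv, hGsym.eq]
  -- the projection identity
  have hkey : ∀ z, (phi z * phi v).trace = (phi z * G⁻¹).trace := by
    intro z
    rw [← hbil z v, hHv, dot_grad, hGinv]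
    show ((Lam y)⁻¹ * Lam z).trace = ((sh * Lam z * sh) * (sA * (Lam y)⁻¹ * sA)).trace
    have hm : (sh * Lam z * sh) * (sA * (Lam y)⁻¹ * sA)
        = sh * (Lam z * ((Lam y)⁻¹ * sA)) := by
      simp only [Matrix.mul_assoc]
      rw [← Matrix.mul_assoc sh sA ((Lam y)⁻¹ * sA), hshsA, Matrix.one_mul]
    have hm2 : Lam z * ((Lam y)⁻¹ * sA) * sh = Lam z * (Lam y)⁻¹ := by
      simp only [Matrix.mul_assoc]
      rw [hsAsh, Matrix.mul_one]
    rw [hm]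
    conv_rhs => rw [Matrix.trace_mul_comm]
    rw [hm2, Matrix.trace_mul_comm]
  -- Newton iterate in φ coordinates
  have hxpv : xp = (2:ℝ) • x - v := hxp
  have hphixp : phi xp = (2:ℝ) • (1 : Matrix (Fin L) (Fin L) ℝ) - phi v := by
    rw [hxpv]
    show sh * Lam ((2:ℝ) • x - v) * sh = _
    rw [map_sub, _root_.map_smul, Matrix.mul_sub, Matrix.sub_mul, Matrix.mul_smul,
      Matrix.smul_mul]
    show (2:ℝ) • (sh * Lam x * sh) - sh * Lam v * sh = _
    rw [show sh * Lam x * sh = phi x from rfl, hphix]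
  set T := phi xp with hTdefn
  have hTsym : T.IsSymm := hphisym xp
  set D := G - T with hDdefn
  have hDsym : D.IsSymm := by
    rw [hDdefn, Matrix.IsSymm, Matrix.transpose_sub, hGsym.eq, hTsym.eq]
  set R := G⁻¹ + G - (2:ℝ) • (1 : Matrix (Fin L) (Fin L) ℝ) with hRdefn
  have hRsym : R.IsSymm := by
    rw [hRdefn, Matrix.IsSymm, Matrix.transpose_sub, Matrix.transpose_add,
      Matrix.transpose_smul, Matrix.transpose_one, hGinvsym.eq, hGsym.eq]
  have hDR : D - R = phi v - G⁻¹ := by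
    rw [hDdefn, hRdefn, hphixp]; abel
  have hphiw : phi (xp - y) = -D := by
    rw [hphi_sub, hDdefn]; abel
  -- ‖D‖² ≤ ‖R‖²
  have h0 : (D * (D - R)).trace = 0 := by
    have hDphi : D = phi (y - xp) := by rw [hphi_sub, hDdefn]
    rw [hDR, hDphi, Matrix.mul_sub, Matrix.trace_sub, hkey (y - xp), sub_self]
  have htrDR : (D * D).trace ≤ (R * R).trace := by
    have hCS := trace_CS hDsym hRsym
    have h1 : (D * D).trace = (D * R).trace := by
      rw [Matrix.mul_sub, Matrix.trace_sub, sub_eq_zero] at h0; exact h0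
    nlinarith [trace_sq_nonneg hDsym, trace_sq_nonneg hRsym]
  -- bound on tr(R²)
  have hGG_low : ∀ u, (1 - r) ^ 2 * (u ⬝ᵥ u) ≤ u ⬝ᵥ (G * G).mulVec u := by
    intro u
    have hq : u ⬝ᵥ (G * G).mulVec u = G.mulVec u ⬝ᵥ G.mulVec u := by
      rw [← Matrix.mulVec_mulVec, dp_symm_mulVec hGsym]
    have hCS : (u ⬝ᵥ G.mulVec u) ^ 2 ≤ (u ⬝ᵥ u) * (G.mulVec u ⬝ᵥ G.mulVec u) := by
      have h := Finset.sum_mul_sq_le_sq_mul_sq Finset.univ u (G.mulVec u)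
      have e1 : (∑ i, u i ^ 2) = u ⬝ᵥ u := by
        simp [dotProduct, sq]
      have e2 : (∑ i, (G.mulVec u) i ^ 2) = G.mulVec u ⬝ᵥ G.mulVec u := by
        simp [dotProduct, sq]
      rw [e1, e2] at h
      exact h
    rw [hq]
    rcases eq_or_lt_of_le (dp_self_nonneg u) with h0 | hpos
    · have : (1 - r) ^ 2 * (u ⬝ᵥ u) = 0 := by rw [← h0]; ring
      rw [this]
      exact dp_self_nonneg (G.mulVec u)
    · have h1 : (0:ℝ) ≤ (1 - r) * (u ⬝ᵥ u) := by positivity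
      have h2 : ((1 - r) * (u ⬝ᵥ u)) ^ 2 ≤ (u ⬝ᵥ G.mulVec u) ^ 2 :=
        pow_le_pow_left₀ h1 (hGlow u) 2
      have h3 : (u ⬝ᵥ u) * ((1 - r) ^ 2 * (u ⬝ᵥ u)) ≤ (u ⬝ᵥ u) * (G.mulVec u ⬝ᵥ G.mulVec u) := by
        nlinarith [hCS]
      exact le_of_mul_le_mul_left h3 hpos
  have hGGsym : (G * G).IsSymm := by
    rw [Matrix.IsSymm, Matrix.transpose_mul, hGsym.eq]
  have hGGpd : (G * G).PosDef := pd_of_quad hGGsym (by positivity) hGG_low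
  have hGGinvb := loewner_inv hGGpd (show (0:ℝ) < (1 - r) ^ 2 by positivity) hGG_low
  have hGGinv : (G * G)⁻¹ = G⁻¹ * G⁻¹ := Matrix.mul_inv_rev G G
  have hPle : ((((1 - r) ^ 2)⁻¹) • (1 : Matrix (Fin L) (Fin L) ℝ) - G⁻¹ * G⁻¹).PosSemidef := by
    refine psd_of_quad ?_ fun u => ?_
    · rw [Matrix.IsSymm, Matrix.transpose_sub, Matrix.transpose_smul, Matrix.transpose_one,
        Matrix.transpose_mul, hGinvsym.eq]
    · have h := hGGinvb u
      rw [hGGinv] at h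
      rw [Matrix.sub_mulVec, dotProduct_sub, Matrix.smul_mulVec, Matrix.one_mulVec,
        dotProduct_smul, smul_eq_mul]
      linarith
  have hE4psd : ((E * E) * (E * E)).PosSemidef := psd_mul_self (by
    rw [Matrix.IsSymm, Matrix.transpose_mul, hEsym.eq])
  have hEG : E * G = G * E := by rw [hG1E]; noncomm_ring
  have hEGi : E * G⁻¹ = G⁻¹ * E := by
    have h1 : G⁻¹ * (E * G) * G⁻¹ = G⁻¹ * (G * E) * G⁻¹ := by rw [hEG]
    calc E * G⁻¹ = G⁻¹ * (G * E) * G⁻¹ := by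
          rw [← Matrix.mul_assoc G⁻¹ G E, Matrix.nonsing_inv_mul _ hGdet, Matrix.one_mul]
      _ = G⁻¹ * (E * G) * G⁻¹ := h1.symm
      _ = G⁻¹ * E * (G * G⁻¹) := by simp only [Matrix.mul_assoc]
      _ = G⁻¹ * E := by rw [Matrix.mul_nonsing_inv _ hGdet, Matrix.mul_one]
  have hEEcomm : (E * E) * G⁻¹ = G⁻¹ * (E * E) := by
    calc (E * E) * G⁻¹ = E * (E * G⁻¹) := by rw [Matrix.mul_assoc]
      _ = E * (G⁻¹ * E) := by rw [hEGi]
      _ = (E * G⁻¹) * E := by rw [Matrix.mul_assoc]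
      _ = (G⁻¹ * E) * E := by rw [hEGi]
      _ = G⁻¹ * (E * E) := by rw [Matrix.mul_assoc]
  have hRfac : R = G⁻¹ * (E * E) := by
    have hEE : E * E = 1 - G - G + G * G := by rw [hEdefn]; noncomm_ring
    have e : G⁻¹ * (1 - G - G + G * G) = G⁻¹ - 1 - 1 + G := by
      rw [Matrix.mul_add, Matrix.mul_sub, Matrix.mul_sub, Matrix.mul_one,
        Matrix.nonsing_inv_mul _ hGdet, ← Matrix.mul_assoc G⁻¹ G G,
        Matrix.nonsing_inv_mul _ hGdet, Matrix.one_mul]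
    rw [hRdefn, hEE, e, two_smul]
    abel
  have hRR : R * R = (G⁻¹ * G⁻¹) * ((E * E) * (E * E)) := by
    rw [hRfac]
    calc (G⁻¹ * (E * E)) * (G⁻¹ * (E * E)) = G⁻¹ * (((E * E) * G⁻¹) * (E * E)) := by
          simp only [Matrix.mul_assoc]
      _ = G⁻¹ * ((G⁻¹ * (E * E)) * (E * E)) := by rw [hEEcomm]
      _ = (G⁻¹ * G⁻¹) * ((E * E) * (E * E)) := by simp only [Matrix.mul_assoc]
  have htrRR : (R * R).trace ≤ (r ^ 2 / (1 - r)) ^ 2 := by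
    rw [hRR, Matrix.trace_mul_comm]
    have h1 := trace_mul_le_of_le (((1 - r) ^ 2)⁻¹) hE4psd hPle
    have h2 := trace_pow4_le hEsym
    have h3 : (E * E).trace ^ 2 ≤ (r ^ 2) ^ 2 := by
      nlinarith [trace_sq_nonneg hEsym]
    calc (((E * E) * (E * E)) * (G⁻¹ * G⁻¹)).trace
        ≤ ((1 - r) ^ 2)⁻¹ * ((E * E) * (E * E)).trace := h1
      _ ≤ ((1 - r) ^ 2)⁻¹ * (r ^ 2) ^ 2 := by
          have := le_trans h2 h3
          have hnn : (0:ℝ) ≤ ((1 - r) ^ 2)⁻¹ := by positivity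
          exact mul_le_mul_of_nonneg_left this hnn
      _ = (r ^ 2 / (1 - r)) ^ 2 := by
          field_simp
  -- bound on D quadratic form
  have hDbound : ∀ u, |u ⬝ᵥ D.mulVec u| ≤ (r ^ 2 / (1 - r)) * (u ⬝ᵥ u) := by
    intro u
    refine (quad_abs_le hDsym u).trans ?_
    refine mul_le_mul_of_nonneg_right ?_ (dp_self_nonneg u)
    have h1 : Real.sqrt ((D * D).trace) ≤ Real.sqrt ((r ^ 2 / (1 - r)) ^ 2) :=
      Real.sqrt_le_sqrt (le_trans htrDR htrRR)
    rwa [Real.sqrt_sq (by positivity)] at h1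
  -- positivity of T
  set δ := (1 - 2 * r) / (1 - r) with hδdef
  have hδpos : 0 < δ := div_pos hr2 hr1
  have hTGD : T = G - D := by rw [hDdefn]; abel
  have hTlow : ∀ u, δ * (u ⬝ᵥ u) ≤ u ⬝ᵥ T.mulVec u := by
    intro u
    have e : u ⬝ᵥ T.mulVec u = u ⬝ᵥ G.mulVec u - u ⬝ᵥ D.mulVec u := by
      rw [hTGD, Matrix.sub_mulVec, dotProduct_sub]
    have h1 := hGlow u
    have h2 := (abs_le.mp (hDbound u)).2
    have hδeq : δ = (1 - r) - r ^ 2 / (1 - r) := by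
      rw [hδdef]; field_simp; ring
    rw [e, hδeq]
    nlinarith [dp_self_nonneg u]
  have hTpd : T.PosDef := pd_of_quad hTsym hδpos hTlow
  have hLamxp : Lam xp = sA * T * sA := (hphi_recover xp).symm
  constructor
  · rw [hLamxp]; exact pd_congr hTpd hsAsym hsAdet
  -- the final norm bound
  have hTdet : IsUnit T.det := isUnit_iff_ne_zero.mpr hTpd.det_pos.ne'
  have hTinvb := loewner_inv hTpd hδpos hTlow
  have hTinvsym : T⁻¹.IsSymm := by
    rw [Matrix.IsSymm, Matrix.transpose_nonsing_inv, hTsym.eq]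
  have hCinv : (Lam xp)⁻¹ = sh * T⁻¹ * sh := by
    rw [hLamxp, Matrix.mul_inv_rev, Matrix.mul_inv_rev, ← hshdef, ← Matrix.mul_assoc]
  have hquad : (xp - y) ⬝ᵥ (hess Lam xp).mulVec (xp - y)
      = (T⁻¹ * D * (T⁻¹ * D)).trace := by
    rw [hess_bilin, hCinv]
    have step : ((sh * T⁻¹ * sh) * Lam (xp - y) * (sh * T⁻¹ * sh) * Lam (xp - y)).trace
        = (T⁻¹ * phi (xp - y) * (T⁻¹ * phi (xp - y))).trace := by
      show _ = (T⁻¹ * (sh * Lam (xp - y) * sh) * (T⁻¹ * (sh * Lam (xp - y) * sh))).trace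
      simp only [Matrix.mul_assoc]
      rw [Matrix.trace_mul_comm]
      simp only [Matrix.mul_assoc]
    rw [step, hphiw]
    simp only [Matrix.mul_neg, Matrix.neg_mul, neg_neg]
  have hT1le : ((δ⁻¹) • (1 : Matrix (Fin L) (Fin L) ℝ) - T⁻¹).PosSemidef := by
    refine psd_of_quad ?_ fun u => ?_
    · rw [Matrix.IsSymm, Matrix.transpose_sub, Matrix.transpose_smul, Matrix.transpose_one,
        hTinvsym.eq]
    · have h := hTinvb u
      rw [Matrix.sub_mulVec, dotProduct_sub, Matrix.smul_mulVec, Matrix.one_mulVec,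
        dotProduct_smul, smul_eq_mul]
      linarith
  have hS1 : (D * T⁻¹ * D).PosSemidef := by
    have h := hTpd.inv.posSemidef.conjTranspose_mul_mul_same D
    rwa [conjTranspose_eq_transpose_of_trivial, hDsym.eq] at h
  have hb1 : (T⁻¹ * D * (T⁻¹ * D)).trace ≤ δ⁻¹ * (δ⁻¹ * (D * D).trace) := by
    have e1 : (T⁻¹ * D * (T⁻¹ * D)).trace = ((D * T⁻¹ * D) * T⁻¹).trace := by
      rw [show T⁻¹ * D * (T⁻¹ * D) = T⁻¹ * (D * T⁻¹ * D) from by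
        simp only [Matrix.mul_assoc], Matrix.trace_mul_comm]
    have e2 : (D * T⁻¹ * D).trace = ((D * D) * T⁻¹).trace := by
      calc (D * T⁻¹ * D).trace = (D * (T⁻¹ * D)).trace := by rw [Matrix.mul_assoc]
        _ = ((T⁻¹ * D) * D).trace := Matrix.trace_mul_comm _ _
        _ = (T⁻¹ * (D * D)).trace := by rw [Matrix.mul_assoc]
        _ = ((D * D) * T⁻¹).trace := Matrix.trace_mul_comm _ _
    have b1 := trace_mul_le_of_le (δ⁻¹) hS1 hT1le
    have b2 := trace_mul_le_of_le (δ⁻¹) (psd_mul_self hDsym) hT1le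
    rw [e1]
    calc ((D * T⁻¹ * D) * T⁻¹).trace ≤ δ⁻¹ * (D * T⁻¹ * D).trace := b1
      _ = δ⁻¹ * ((D * D) * T⁻¹).trace := by rw [e2]
      _ ≤ δ⁻¹ * (δ⁻¹ * (D * D).trace) := by
          exact mul_le_mul_of_nonneg_left b2 (le_of_lt (inv_pos.mpr hδpos))
      _ = δ⁻¹ * (δ⁻¹ * (D * D).trace) := by ring
  have hfin : (T⁻¹ * D * (T⁻¹ * D)).trace ≤ (r ^ 2 / (1 - 2 * r)) ^ 2 := by
    have hDD : (D * D).trace ≤ (r ^ 2 / (1 - r)) ^ 2 := le_trans htrDR htrRR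
    have hstep : δ⁻¹ * (δ⁻¹ * (D * D).trace) ≤ δ⁻¹ * (δ⁻¹ * (r ^ 2 / (1 - r)) ^ 2) := by
      have hnn : (0:ℝ) ≤ δ⁻¹ := le_of_lt (inv_pos.mpr hδpos)
      exact mul_le_mul_of_nonneg_left (mul_le_mul_of_nonneg_left hDD hnn) hnn
    have heq : δ⁻¹ * (δ⁻¹ * (r ^ 2 / (1 - r)) ^ 2) = (r ^ 2 / (1 - 2 * r)) ^ 2 := by
      rw [hδdef]
      field_simp
    linarith
  rw [locNorm, hquad]
  have hsq2 := Real.sqrt_le_sqrt hfin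
  rwa [Real.sqrt_sq (by positivity)] at hsq2
end
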